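/- For integers k ≥ 0 and n ≥ 1, let c_n(k) := ∑_T (k+1)^{I(T)}, the sum running over all plane trees T with exactly n leaves and no vertex of outdegree 1, where I(T) is the number of vertices of T distinct from the root having outdegree ≥ 2 (this is a finite sum, since such a tree with n leaves has at most 2n−1 vertices). Then for every integer k ≥ 0, the formal power series F_k(z) := ∑_{n≥1} c_n(k) z^n with integer coefficients satisfies the quadratic equation (k+1)(k+2)·F_k(z)² − (1 + (2k²+4k+1)z)·F_k(z) + k(k+1)z² + z = 0. In particular c_1(k) = c_2(k) = 1, c_3(k) = 2(k+1)+1, and c_4(k) = 5(k+1)² + 5(k+1) + 1. -/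

import Mathlib

open MeasureTheory Filter Set

/-- A plane tree: a finite, prefix-closed set of finite sequences of positive integers,
containing the empty sequence, such that the children of each vertex `v` are exactly
`v ++ [i]` for `1 ≤ i ≤ d` for some outdegree `d`. -/
structure PlaneTree where
  verts : Finset (List ℕ)
  root_mem : ([] : List ℕ) ∈ verts
  prefix_closed : ∀ v ∈ verts, ∀ u : List ℕ, u <+: v → u ∈ verts
  children : ∀ v ∈ verts, ∃ d : ℕ, ∀ i : ℕ, v ++ [i] ∈ verts ↔ 1 ≤ i ∧ i ≤ d

namespace PlaneTree

open Classical in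
/-- The outdegree of a vertex `v` in a plane tree: its number of children. -/
noncomputable def out (T : PlaneTree) (v : List ℕ) : ℕ :=
  (T.verts.filter fun w => ∃ i : ℕ, w = v ++ [i]).card

/-- The number of vertices of a plane tree. -/
def size (T : PlaneTree) : ℕ := T.verts.card

instance : Countable PlaneTree := by
  have h : Function.Injective fun T : PlaneTree => T.verts := by
    intro a b hab
    cases a; cases b
    simp only at hab
    subst hab
    rfl
  exact h.countable

end PlaneTree

/-- The Bienaymé–Galton–Watson weight of a plane tree. -/
noncomputable def BGWweight (μ : ℕ → ℝ) (T : PlaneTree) : ℝ :=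
  ∏ v ∈ T.verts, μ (T.out v)

/-- Tail of an offspring distribution `μ`: `μ([x,∞))`. -/
noncomputable def muTail (μ : ℕ → ℝ) (x : ℝ) : ℝ :=
  ∑' k : ℕ, if x ≤ k then μ k else 0

/-- A function is regularly varying at infinity with index `ρ`. -/
def RegularlyVarying (f : ℝ → ℝ) (ρ : ℝ) : Prop :=
  ∀ l : ℝ, 0 < l → Tendsto (fun x => f (l * x) / f x) atTop (nhds (l ^ ρ))

/-- The scaling sequence `b_n` associated to an offspring distribution in the domain
of attraction of an `α`-stable law. -/
noncomputable def bSeq (α : ℝ) (μ : ℕ → ℝ) (n : ℕ) : ℝ :=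
  ((α - 1) / Real.Gamma (2 - α)) ^ (-(1 / α)) * sInf {y : ℝ | 0 ≤ y ∧ muTail μ y ≤ 1 / n}

open Classical in
/-- The total `BGW_μ`-weight of plane trees with `n` vertices; the conditioned tree `T_n`
is well-defined iff this is nonzero. -/
noncomputable def Zpart (μ : ℕ → ℝ) (n : ℕ) : ENNReal :=
  ∑' T : PlaneTree, if T.size = n then ENNReal.ofReal (BGWweight μ T) else 0

namespace PlaneTree

open Classical in
/-- The number of leaves (vertices of outdegree `0`) of a plane tree. -/
noncomputable def numLeaves (T : PlaneTree) : ℕ :=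
  (T.verts.filter fun v => T.out v = 0).card

open Classical in
/-- The number of non-root vertices of outdegree at least `2` of a plane tree. -/
noncomputable def numInternal (T : PlaneTree) : ℕ :=
  (T.verts.filter fun v => v ≠ [] ∧ 2 ≤ T.out v).card

end PlaneTree

open Classical in
/-- `c_n(k) = ∑_T (k+1)^{I(T)}`, the sum over plane trees with `n` leaves and no vertex of
outdegree `1`, where `I(T)` is the number of non-root vertices of outdegree `≥ 2`;
computed in `ℕ∞` so that it is well defined without a finiteness proof. -/
noncomputable def treeCount (n k : ℕ) : ℕ∞ :=
  ∑' T : PlaneTree,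
    if T.numLeaves = n ∧ ∀ v ∈ T.verts, T.out v ≠ 1
    then ((k : ℕ∞) + 1) ^ T.numInternal else 0


-- ===== auxiliary development =====

inductive PT : Type
  | node : List PT → PT

namespace PT


instance : Inhabited PT := ⟨node []⟩

def deg : PT → ℕ
  | node l => l.length

mutual
def size : PT → ℕ
  | node l => 1 + fsize l
def fsize : List PT → ℕ
  | [] => 0
  | t :: ts => size t + fsize ts
end

mutual
def leaves : PT → ℕ
  | node [] => 1
  | node (t :: ts) => fleaves (t :: ts)
def fleaves : List PT → ℕ
  | [] => 0
  | t :: ts => leaves t + fleaves ts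
end

mutual
def internal : PT → ℕ
  | node l => finternal l
def finternal : List PT → ℕ
  | [] => 0
  | t :: ts => internal t + (if 2 ≤ deg t then 1 else 0) + finternal ts
end

mutual
def good : PT → Prop
  | node l => l.length ≠ 1 ∧ fgood l
def fgood : List PT → Prop
  | [] => True
  | t :: ts => good t ∧ fgood ts
end

theorem ind (P : PT → Prop) (h : ∀ l : List PT, (∀ t ∈ l, P t) → P (node l)) : ∀ t, P t
  | node l => h l (fun t _ => ind P h t)
termination_by t => sizeOf t
decreasing_by
  have := List.sizeOf_lt_of_mem (by assumption : t ∈ l)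
  simp only [PT.node.sizeOf_spec]
  omega

theorem fgood_iff (l : List PT) : fgood l ↔ ∀ t ∈ l, good t := by
  induction l with
  | nil => simp [fgood]
  | cons t ts ih => simp [fgood, ih]

theorem one_le_leaves (t : PT) : 1 ≤ leaves t := by
  induction t using ind with
  | h l ih =>
    cases l with
    | nil => simp [leaves]
    | cons t ts =>
      have := ih t (by simp)
      simp only [leaves, fleaves]
      omega

theorem one_le_size (t : PT) : 1 ≤ size t := by
  cases t with | node l => simp [size]

theorem le_fleaves_of_mem {l : List PT} {t : PT} (h : t ∈ l) : leaves t ≤ fleaves l := by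
  induction l with
  | nil => simp at h
  | cons s ts ih =>
    rcases List.mem_cons.mp h with rfl | h'
    · simp [fleaves]
    · have := ih h'
      simp [fleaves]; omega

theorem le_fsize_of_mem {l : List PT} {t : PT} (h : t ∈ l) : size t ≤ fsize l := by
  induction l with
  | nil => simp at h
  | cons s ts ih =>
    rcases List.mem_cons.mp h with rfl | h'
    · simp [fsize]
    · have := ih h'
      simp [fsize]; omega

theorem length_le_fsize (l : List PT) : l.length ≤ fsize l := by
  induction l with
  | nil => simp [fsize]
  | cons t ts ih =>
    have := one_le_size t
    simp [fsize]; omega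

/-- size bound for good trees -/
theorem size_add_one_le (t : PT) (hg : good t) : size t + 1 ≤ 2 * leaves t := by
  induction t using ind with
  | h l ih =>
    obtain ⟨hlen, hfg⟩ := hg
    cases l with
    | nil => simp [size, fsize, leaves]
    | cons t ts =>
      have hd : 2 ≤ (t :: ts).length := by
        rcases Nat.lt_or_ge (t :: ts).length 2 with h | h
        · interval_cases h' : (t :: ts).length <;> simp_all
        · exact h
      -- forest claim : fsize l + l.length ≤ 2 * fleaves l given all good
      have key : ∀ m : List PT, (∀ s ∈ m, s ∈ t :: ts) → fgood m →
          fsize m + m.length ≤ 2 * fleaves m := by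
        intro m
        induction m with
        | nil => simp [fsize, fleaves]
        | cons s ms ihm =>
          intro hsub hfg'
          obtain ⟨hgs, hfgm⟩ := hfg'
          have h1 := ih s (hsub s (by simp)) hgs
          have h2 := ihm (fun x hx => hsub x (by simp [hx])) hfgm
          simp only [fsize, fleaves, List.length_cons]
          omega
      have := key (t :: ts) (fun s hs => hs) hfg
      simp only [size, leaves]
      omega


mutual
def verts : PT → Finset (List ℕ)
  | node l => insert [] (fverts 1 l)
def fverts : ℕ → List PT → Finset (List ℕ)
  | _, [] => ∅
  | j, t :: ts => (verts t).image (j :: ·) ∪ fverts (j+1) ts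
end

theorem mem_fverts {p : List ℕ} : ∀ {l : List PT} {j : ℕ},
    p ∈ fverts j l ↔ ∃ (i : ℕ) (t : PT) (q : List ℕ),
      l[i]? = some t ∧ p = (j + i) :: q ∧ q ∈ verts t := by
  intro l
  induction l with
  | nil => simp [fverts]
  | cons t ts ih =>
    intro j
    simp only [fverts, Finset.mem_union, Finset.mem_image, ih]
    constructor
    · rintro (⟨q, hq, rfl⟩ | ⟨i, t', q, hget, rfl, hq⟩)
      · exact ⟨0, t, q, by simp, by simp, hq⟩
      · exact ⟨i + 1, t', q, by simpa using hget, by ring_nf, hq⟩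
    · rintro ⟨i, t', q, hget, rfl, hq⟩
      cases i with
      | zero =>
        simp only [List.getElem?_cons_zero, Option.some.injEq] at hget
        subst hget
        exact Or.inl ⟨q, hq, by simp⟩
      | succ i =>
        refine Or.inr ⟨i, t', q, by simpa using hget, by ring_nf, hq⟩

theorem mem_verts_iff {p : List ℕ} {l : List PT} :
    p ∈ verts (node l) ↔ p = [] ∨ ∃ (i : ℕ) (t : PT) (q : List ℕ),
      l[i]? = some t ∧ p = (1 + i) :: q ∧ q ∈ verts t := by
  simp [verts, mem_fverts]

theorem root_mem_verts (t : PT) : [] ∈ verts t := by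
  cases t with | node l => simp [verts]

theorem mem_verts_cons {j : ℕ} {q : List ℕ} {l : List PT} :
    (j :: q) ∈ verts (node l) ↔ ∃ t : PT, l[j-1]? = some t ∧ 1 ≤ j ∧ q ∈ verts t := by
  rw [mem_verts_iff]
  constructor
  · rintro (h | ⟨i, t, q', hget, heq, hq⟩)
    · simp at h
    · obtain ⟨rfl, rfl⟩ : j = 1 + i ∧ q = q' := by
        constructor <;> [exact (List.cons.injEq .. ▸ heq).1; exact (List.cons.injEq .. ▸ heq).2]
      exact ⟨t, by simpa using hget, by omega, hq⟩
  · rintro ⟨t, hget, hj, hq⟩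
    exact Or.inr ⟨j - 1, t, q, hget, by congr 1; omega, hq⟩

theorem singleton_mem_verts {i : ℕ} {l : List PT} :
    [i] ∈ verts (node l) ↔ 1 ≤ i ∧ i ≤ l.length := by
  rw [show ([i] : List ℕ) = i :: [] from rfl, mem_verts_cons]
  constructor
  · rintro ⟨t, hget, hi, -⟩
    obtain ⟨hlt, -⟩ := List.getElem?_eq_some_iff.mp hget
    exact ⟨hi, by omega⟩
  · rintro ⟨hi, hil⟩
    have hlt : i - 1 < l.length := by omega
    exact ⟨l[i-1], by simp [List.getElem?_eq_getElem hlt], hi, root_mem_verts _⟩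

theorem verts_prefix_closed : ∀ t : PT, ∀ v ∈ verts t, ∀ u : List ℕ, u <+: v → u ∈ verts t := by
  intro t
  induction t using ind with
  | h l ih =>
    intro v hv u hu
    rcases mem_verts_iff.mp hv with rfl | ⟨i, t', q, hget, rfl, hq⟩
    · simpa [List.prefix_nil.mp hu] using root_mem_verts (node l)
    · cases u with
      | nil => exact root_mem_verts _
      | cons a u' =>
        obtain ⟨rfl, hu'⟩ := List.cons_prefix_cons.mp hu
        have ht' : t' ∈ l := List.mem_of_getElem? hget
        have := ih t' ht' q hq u' hu'
        exact mem_verts_iff.mpr (Or.inr ⟨i, t', u', hget, rfl, this⟩)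

theorem verts_children : ∀ t : PT, ∀ v ∈ verts t,
    ∃ d : ℕ, ∀ i : ℕ, v ++ [i] ∈ verts t ↔ 1 ≤ i ∧ i ≤ d := by
  intro t
  induction t using ind with
  | h l ih =>
    intro v hv
    rcases mem_verts_iff.mp hv with rfl | ⟨i, t', q, hget, rfl, hq⟩
    · exact ⟨l.length, fun i => by simpa using singleton_mem_verts⟩
    · have ht' : t' ∈ l := List.mem_of_getElem? hget
      obtain ⟨d, hd⟩ := ih t' ht' q hq
      refine ⟨d, fun i' => ?_⟩
      rw [show ((1 + i) :: q) ++ [i'] = (1+i) :: (q ++ [i']) from rfl, mem_verts_cons]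
      constructor
      · rintro ⟨t'', hget'', -, hq''⟩
        have : t'' = t' := by
          rw [show 1 + i - 1 = i by omega] at hget''
          rw [hget] at hget''; exact (Option.some.injEq .. ▸ hget'').symm ▸ rfl
        exact (hd i').mp (this ▸ hq'')
      · intro hi'
        exact ⟨t', by rw [show 1 + i - 1 = i by omega]; exact hget, by omega, (hd i').mpr hi'⟩

def toP (t : PT) : PlaneTree :=
  ⟨verts t, root_mem_verts t, verts_prefix_closed t, verts_children t⟩

end PT

namespace PlaneTree
open Classical in
theorem out_eq (P : PlaneTree) (v : List ℕ) (d : ℕ)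
    (h : ∀ i : ℕ, v ++ [i] ∈ P.verts ↔ 1 ≤ i ∧ i ≤ d) : P.out v = d := by
  have hinj : Function.Injective (fun i : ℕ => v ++ [i]) := by
    intro a b hab
    simpa using List.append_cancel_left hab
  have hset : (P.verts.filter fun w => ∃ i : ℕ, w = v ++ [i])
      = (Finset.Icc 1 d).image (fun i => v ++ [i]) := by
    ext w
    simp only [Finset.mem_filter, Finset.mem_image, Finset.mem_Icc]
    constructor
    · rintro ⟨hw, i, rfl⟩
      exact ⟨i, (h i).mp hw, rfl⟩
    · rintro ⟨i, hi, rfl⟩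
      exact ⟨(h i).mpr hi, i, rfl⟩
  rw [PlaneTree.out, hset, Finset.card_image_of_injective _ hinj, Nat.card_Icc]
  omega

open Classical in
theorem card_filter_two_le (Q : PlaneTree) :
    (Q.verts.filter fun v => 2 ≤ Q.out v).card
      = Q.numInternal + (if 2 ≤ Q.out [] then 1 else 0) := by
  rw [numInternal]
  have h1 : (Q.verts.filter fun v => v ≠ [] ∧ 2 ≤ Q.out v)
      = (Q.verts.filter fun v => 2 ≤ Q.out v).filter (fun v => v ≠ []) := by
    rw [Finset.filter_filter]
    exact Finset.filter_congr (fun x _ => by tauto)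
  have h2 : ((Q.verts.filter fun v => 2 ≤ Q.out v).filter (fun v => ¬ v ≠ [])).card
      = (if 2 ≤ Q.out [] then 1 else 0) := by
    have : ((Q.verts.filter fun v => 2 ≤ Q.out v).filter (fun v => ¬ v ≠ []))
        = if 2 ≤ Q.out [] then {([] : List ℕ)} else ∅ := by
      ext w
      simp only [Finset.mem_filter, not_not]
      constructor
      · rintro ⟨⟨hw, h2'⟩, rfl⟩
        simp [h2']
      · intro hw
        by_cases hc : 2 ≤ Q.out [] <;> simp [hc] at hw
        exact ⟨⟨hw ▸ Q.root_mem, hw ▸ hc⟩, by simp [hw]⟩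
    rw [this]
    by_cases hc : 2 ≤ Q.out [] <;> simp [hc]
  have := Finset.card_filter_add_card_filter_not
    (s := Q.verts.filter fun v => 2 ≤ Q.out v) (p := fun v => v ≠ [])
  rw [h1]
  omega
end PlaneTree

namespace PT

theorem nil_not_mem_fverts {j : ℕ} {l : List PT} : ([] : List ℕ) ∉ fverts j l := by
  intro h
  obtain ⟨i, t, q, -, heq, -⟩ := mem_fverts.mp h
  simp at heq

theorem verts_toP (t : PT) : (toP t).verts = verts t := rfl

theorem out_toP_nil (l : List PT) : (toP (node l)).out [] = l.length := by
  apply PlaneTree.out_eq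
  intro i
  rw [List.nil_append]; exact singleton_mem_verts

theorem out_toP_root (t : PT) : (toP t).out [] = deg t := by
  cases t with | node l => rw [out_toP_nil]; rfl

theorem out_toP_cons {l : List PT} {i : ℕ} {t : PT} {q : List ℕ}
    (hget : l[i]? = some t) (hq : q ∈ verts t) :
    (toP (node l)).out ((1 + i) :: q) = (toP t).out q := by
  obtain ⟨d, hd⟩ := verts_children t q hq
  rw [PlaneTree.out_eq (toP t) q d hd]
  apply PlaneTree.out_eq
  intro i'
  show (1 + i) :: (q ++ [i']) ∈ verts (node l) ↔ _
  rw [mem_verts_cons]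
  constructor
  · rintro ⟨t', hget', -, hq'⟩
    rw [show 1 + i - 1 = i by omega, hget] at hget'
    obtain rfl : t = t' := by injection hget'
    exact (hd i').mp hq'
  · intro hi'
    exact ⟨t, by rw [show 1 + i - 1 = i by omega]; exact hget, by omega, (hd i').mpr hi'⟩

theorem disj_fverts {j : ℕ} {t : PT} {ts : List PT} :
    Disjoint ((verts t).image (j :: ·)) (fverts (j+1) ts) := by
  rw [Finset.disjoint_left]
  rintro p hp hp'
  obtain ⟨q, -, rfl⟩ := Finset.mem_image.mp hp
  obtain ⟨i, t', q', -, heq, -⟩ := mem_fverts.mp hp'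
  have : j = j + 1 + i := (List.cons.injEq .. ▸ heq).1
  omega

open Classical in
theorem main_corr : ∀ t : PT,
    (toP t).numLeaves = leaves t ∧ (toP t).numInternal = internal t ∧
      ((∀ v ∈ (toP t).verts, (toP t).out v ≠ 1) ↔ good t) := by
  intro t
  induction t using ind with
  | h l ih =>
    set P := toP (node l) with hP
    -- forest claims
    have claim : ∀ ts : List PT, (∀ s ∈ ts, s ∈ l) → ∀ j : ℕ, 1 ≤ j →
        (∀ i t', ts[i]? = some t' → l[j - 1 + i]? = some t') →
        ((fverts j ts).filter (fun p => P.out p = 0)).card = fleaves ts ∧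
        ((fverts j ts).filter (fun p => p ≠ [] ∧ 2 ≤ P.out p)).card = finternal ts ∧
        ((∀ v ∈ fverts j ts, P.out v ≠ 1) ↔ fgood ts) := by
      intro ts
      induction ts with
      | nil => intro _ j _ _; simp [fverts, fleaves, finternal, fgood]
      | cons s ts' ihts =>
        intro hmem j hj hsub
        have hs_mem : s ∈ l := hmem s (by simp)
        have hgets : l[j - 1]? = some s := by
          have := hsub 0 s (by simp)
          simpa using this
        have hout : ∀ q ∈ verts s, P.out (j :: q) = (toP s).out q := by
          intro q hq
          have : j = 1 + (j - 1) := by omega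
          rw [this]
          exact out_toP_cons hgets hq
        obtain ⟨ih1, ih2, ih3⟩ := ih s hs_mem
        have hrec := ihts (fun x hx => hmem x (by simp [hx])) (j + 1) (by omega)
          (fun i t' h => by
            have := hsub (i + 1) t' (by simpa using h)
            rwa [show j + 1 - 1 + i = j - 1 + (i + 1) by omega])
        have hdisj := disj_fverts (j := j) (t := s) (ts := ts')
        constructor
        · rw [fverts, Finset.filter_union,
            Finset.card_union_of_disjoint (Finset.disjoint_filter_filter hdisj),
            Finset.filter_image, Finset.card_image_of_injective _
              (fun a b hab => by injection hab)]
          have : ((verts s).filter fun q => P.out (j :: q) = 0)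
              = ((verts s).filter fun q => (toP s).out q = 0) :=
            Finset.filter_congr (fun q hq => by rw [hout q hq])
          rw [this]
          have : ((verts s).filter fun q => (toP s).out q = 0).card = leaves s := by
            rw [← ih1]; rfl
          rw [this, hrec.1, fleaves]
        constructor
        · rw [fverts, Finset.filter_union,
            Finset.card_union_of_disjoint (Finset.disjoint_filter_filter hdisj),
            Finset.filter_image, Finset.card_image_of_injective _
              (fun a b hab => by injection hab)]
          have : ((verts s).filter fun q => (j :: q) ≠ [] ∧ 2 ≤ P.out (j :: q))
              = ((verts s).filter fun q => 2 ≤ (toP s).out q) :=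
            Finset.filter_congr (fun q hq => by simp [hout q hq])
          rw [this]
          have h2le : ((verts s).filter fun q => 2 ≤ (toP s).out q).card
              = internal s + (if 2 ≤ deg s then 1 else 0) := by
            have := (toP s).card_filter_two_le
            rw [verts_toP] at this
            rw [this, ih2, out_toP_root]
          rw [h2le, hrec.2.1, finternal]
        · rw [fverts]
          constructor
          · intro hall
            refine ⟨ih3.mp (fun v hv => ?_),
              hrec.2.2.mp (fun v hv => hall v (Finset.mem_union_right _ hv))⟩
            have := hall (j :: v)
              (Finset.mem_union.mpr (Or.inl (Finset.mem_image.mpr ⟨v, hv, rfl⟩)))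
            rwa [hout v hv] at this
          · rintro ⟨hgs, hgts⟩ v hv
            rcases Finset.mem_union.mp hv with hv' | hv'
            · obtain ⟨q, hq, rfl⟩ := Finset.mem_image.mp hv'
              rw [hout q hq]
              exact ih3.mpr hgs q hq
            · exact hrec.2.2.mpr hgts v hv'
    have hroot : P.out [] = l.length := out_toP_nil l
    have hverts : P.verts = insert [] (fverts 1 l) := rfl
    have hnil : ([] : List ℕ) ∉ fverts 1 l := nil_not_mem_fverts
    have hcl := claim l (fun s hs => hs) 1 le_rfl (fun i t' h => by simpa using h)
    refine ⟨?_, ?_, ?_⟩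
    · rw [PlaneTree.numLeaves, hverts, Finset.filter_insert]
      cases l with
      | nil =>
        rw [if_pos (by rw [hroot]; rfl)]
        rw [Finset.card_insert_of_notMem (fun h => hnil (Finset.mem_filter.mp h).1)]
        rw [hcl.1]
        rfl
      | cons t' ts' =>
        rw [if_neg (by rw [hroot]; simp)]
        rw [hcl.1]
        rfl
    · rw [PlaneTree.numInternal, hverts, Finset.filter_insert, if_neg (by simp)]
      rw [hcl.2.1]
      rfl
    · rw [hverts]
      constructor
      · intro hall
        refine ⟨fun hlen => ?_, hcl.2.2.mp (fun v hv => hall v (by simp [hv]))⟩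
        exact hall [] (by simp) (by rw [hroot, hlen])
      · rintro ⟨hlen, hfg⟩ v hv
        rcases Finset.mem_insert.mp hv with rfl | hv'
        · rw [hroot]; exact hlen
        · exact hcl.2.2.mpr hfg v hv'

end PT


theorem planeTree_ext {a b : PlaneTree} (h : a.verts = b.verts) : a = b := by
  cases a; cases b
  simp only at h
  subst h
  rfl

namespace PT

theorem cons_mem_verts_get {l : List PT} {i : ℕ} {t : PT} {q : List ℕ}
    (hget : l[i]? = some t) : ((1 + i) :: q ∈ verts (node l)) ↔ q ∈ verts t := by
  rw [mem_verts_cons]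
  constructor
  · rintro ⟨t', hget', -, hq'⟩
    rw [show 1 + i - 1 = i by omega, hget] at hget'
    obtain rfl : t = t' := by injection hget'
    exact hq'
  · intro hq
    exact ⟨t, by rw [show 1 + i - 1 = i by omega]; exact hget, by omega, hq⟩

theorem verts_inj : ∀ t s : PT, verts t = verts s → t = s := by
  intro t
  induction t using ind with
  | h l ih =>
    intro s h
    cases s with | node m =>
    have key : ∀ i, (1 ≤ i ∧ i ≤ l.length) ↔ (1 ≤ i ∧ i ≤ m.length) := fun i => by
      rw [← singleton_mem_verts, ← singleton_mem_verts, h]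
    have hlen : l.length = m.length := by
      have k1 := key l.length
      have k2 := key m.length
      omega
    congr 1
    refine List.ext_getElem hlen (fun i hi him => ?_)
    have hgl : l[i]? = some l[i] := List.getElem?_eq_getElem hi
    have hgm : m[i]? = some m[i] := List.getElem?_eq_getElem him
    refine ih l[i] (List.getElem_mem hi) _ ?_
    ext q
    rw [← cons_mem_verts_get (q := q) hgl, ← cons_mem_verts_get (q := q) hgm, h]

theorem toP_injective : Function.Injective toP := by
  intro a b hab
  exact verts_inj a b (congrArg PlaneTree.verts hab)

def subVerts (P : PlaneTree) (i : ℕ) : Finset (List ℕ) :=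
  (P.verts.filter fun w => w.head? = some i).image List.tail

theorem mem_subVerts {P : PlaneTree} {i : ℕ} {q : List ℕ} :
    q ∈ subVerts P i ↔ i :: q ∈ P.verts := by
  classical
  simp only [subVerts, Finset.mem_image, Finset.mem_filter]
  constructor
  · rintro ⟨w, ⟨hw, hh⟩, rfl⟩
    cases w with
    | nil => simp at hh
    | cons a w' =>
      obtain rfl : a = i := by simpa using hh
      exact hw
  · intro h
    exact ⟨i :: q, ⟨h, rfl⟩, rfl⟩

def subPT (P : PlaneTree) (i : ℕ) (h : [i] ∈ P.verts) : PlaneTree where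
  verts := subVerts P i
  root_mem := mem_subVerts.mpr h
  prefix_closed := by
    intro v hv u hu
    rw [mem_subVerts] at hv ⊢
    exact P.prefix_closed _ hv _ (List.cons_prefix_cons.mpr ⟨rfl, hu⟩)
  children := by
    intro v hv
    rw [mem_subVerts] at hv
    obtain ⟨d, hd⟩ := P.children _ hv
    refine ⟨d, fun j => ?_⟩
    rw [mem_subVerts]
    exact hd j

theorem subVerts_card_lt (P : PlaneTree) (i : ℕ) :
    (subVerts P i).card < P.verts.card := by
  classical
  have h1 : (subVerts P i).card ≤ (P.verts.filter fun w => w.head? = some i).card :=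
    Finset.card_image_le
  have h2 : (P.verts.filter fun w => w.head? = some i) ⊆ P.verts.erase [] := by
    intro w hw
    obtain ⟨hw1, hw2⟩ := Finset.mem_filter.mp hw
    refine Finset.mem_erase.mpr ⟨?_, hw1⟩
    rintro rfl
    simp at hw2
  have h3 := Finset.card_le_card h2
  have h4 : (P.verts.erase []).card = P.verts.card - 1 :=
    Finset.card_erase_of_mem P.root_mem
  have h5 : 1 ≤ P.verts.card := Finset.card_pos.mpr ⟨[], P.root_mem⟩
  omega

theorem toP_surj_aux : ∀ n : ℕ, ∀ P : PlaneTree, P.verts.card ≤ n →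
    ∃ t : PT, (toP t).verts = P.verts := by
  intro n
  induction n with
  | zero =>
    intro P h
    have : 1 ≤ P.verts.card := Finset.card_pos.mpr ⟨[], P.root_mem⟩
    omega
  | succ n ihn =>
    intro P hP
    obtain ⟨d, hd⟩ := P.children [] P.root_mem
    simp only [List.nil_append] at hd
    have hsub : ∀ i : ℕ, ∃ t : PT, 1 ≤ i → i ≤ d → (toP t).verts = subVerts P i := by
      intro i
      by_cases hi : 1 ≤ i ∧ i ≤ d
      · have hmem : [i] ∈ P.verts := (hd i).mpr hi
        have hcard : (subPT P i hmem).verts.card ≤ n := by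
          have := subVerts_card_lt P i
          have : (subPT P i hmem).verts.card < P.verts.card := this
          omega
        obtain ⟨t, ht⟩ := ihn (subPT P i hmem) hcard
        exact ⟨t, fun _ _ => ht⟩
      · exact ⟨node [], fun h1 h2 => absurd ⟨h1, h2⟩ hi⟩
    choose f hf using hsub
    refine ⟨node ((List.range d).map fun i => f (i+1)), ?_⟩
    have hL : ∀ i : ℕ, i < d →
        ((List.range d).map fun i => f (i+1))[i]? = some (f (i+1)) := by
      intro i hi
      simp [List.getElem?_map, List.getElem?_range hi]
    ext p
    rw [verts_toP, mem_verts_iff]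
    constructor
    · rintro (rfl | ⟨i, t, q, hget, rfl, hq⟩)
      · exact P.root_mem
      · have hilen : i < d := by
          have := List.getElem?_eq_some_iff.mp hget
          simpa using this.1
        rw [hL i hilen] at hget
        obtain rfl : f (i+1) = t := by injection hget
        have := hf (i+1) (by omega) (by omega)
        rw [← verts_toP, this] at hq
        have : (i+1) :: q ∈ P.verts := mem_subVerts.mp hq
        simpa [show 1 + i = i + 1 by omega] using this
    · intro hp
      cases p with
      | nil => exact Or.inl rfl
      | cons j q =>
        have hj : [j] ∈ P.verts := P.prefix_closed _ hp [j] ⟨q, rfl⟩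
        have hjd : 1 ≤ j ∧ j ≤ d := (hd j).mp hj
        refine Or.inr ⟨j - 1, f j, q, ?_, ?_, ?_⟩
        · have := hL (j-1) (by omega)
          rwa [show j - 1 + 1 = j by omega] at this
        · congr 1
          omega
        · rw [← verts_toP, hf j hjd.1 hjd.2]
          exact mem_subVerts.mpr hp

theorem toP_surjective : Function.Surjective toP := by
  intro P
  obtain ⟨t, ht⟩ := toP_surj_aux P.verts.card P le_rfl
  exact ⟨t, planeTree_ext ht⟩

end PT

namespace PT

theorem length_le_fleaves (l : List PT) : l.length ≤ fleaves l := by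
  induction l with
  | nil => simp [fleaves]
  | cons t ts ih =>
    have := one_le_leaves t
    simp only [fleaves, List.length_cons]
    omega

theorem finite_lists {S : Set PT} (hS : S.Finite) (m : ℕ) :
    {l : List PT | l.length ≤ m ∧ ∀ s ∈ l, s ∈ S}.Finite := by
  haveI := hS.to_subtype
  have h1 : {l : List ↥S | l.length ≤ m}.Finite := List.finite_length_le _ m
  apply Set.Finite.subset (h1.image (List.map Subtype.val))
  rintro l ⟨hlen, hmem⟩
  refine ⟨l.attach.map (fun x => (⟨x.1, hmem x.1 x.2⟩ : ↥S)), by simpa using hlen, ?_⟩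
  simp only [List.map_map]
  rw [show (Subtype.val ∘ fun x : {x // x ∈ l} => (⟨x.1, hmem x.1 x.2⟩ : ↥S))
      = fun x : {x // x ∈ l} => (x : PT) from rfl]
  simp [List.attach_map_val (l := l) (f := fun x => x)]

theorem finite_size_le : ∀ m : ℕ, {t : PT | size t ≤ m}.Finite := by
  intro m
  induction m with
  | zero =>
    convert Set.finite_empty
    ext t
    have := one_le_size t
    simp only [Set.mem_setOf_eq, Set.mem_empty_iff_false, iff_false]
    omega
  | succ m ihm =>
    apply Set.Finite.subset ((finite_lists ihm m).image (fun l => node l))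
    intro t ht
    cases t with | node l =>
    have hsz : 1 + fsize l ≤ m + 1 := ht
    refine ⟨l, ⟨?_, fun s hs => ?_⟩, rfl⟩
    · have := length_le_fsize l; omega
    · have := le_fsize_of_mem hs
      simp only [Set.mem_setOf_eq]
      omega

theorem finite_good (n : ℕ) : {t : PT | leaves t = n ∧ good t}.Finite := by
  apply Set.Finite.subset (finite_size_le (2 * n))
  rintro t ⟨hl, hg⟩
  have := size_add_one_le t hg
  simp only [Set.mem_setOf_eq]
  omega

theorem finite_goodL (n : ℕ) : {l : List PT | l ≠ [] ∧ fgood l ∧ fleaves l = n}.Finite := by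
  apply Set.Finite.subset (finite_lists (finite_size_le (2 * n)) n)
  rintro l ⟨-, hg, hl⟩
  refine ⟨by have := length_le_fleaves l; omega, fun s hs => ?_⟩
  have hgs : good s := (fgood_iff l).mp hg s hs
  have h1 := size_add_one_le s hgs
  have h2 := le_fleaves_of_mem hs
  simp only [Set.mem_setOf_eq]
  omega

noncomputable def goodFinset (n : ℕ) : Finset PT := (finite_good n).toFinset

theorem mem_goodFinset {n : ℕ} {t : PT} : t ∈ goodFinset n ↔ leaves t = n ∧ good t :=
  Set.Finite.mem_toFinset _

noncomputable def LF (n : ℕ) : Finset (List PT) := (finite_goodL n).toFinset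

theorem mem_LF {n : ℕ} {l : List PT} : l ∈ LF n ↔ l ≠ [] ∧ fgood l ∧ fleaves l = n :=
  Set.Finite.mem_toFinset _

open Classical in
noncomputable def gw (k : ℕ) (t : PT) : ℕ :=
  if good t then (k+1)^(internal t) * (if 2 ≤ deg t then (k+1) else 1) else 0

noncomputable def acount (n k : ℕ) : ℕ := ∑ t ∈ goodFinset n, (k+1)^(internal t)
noncomputable def gcount (n k : ℕ) : ℕ := ∑ t ∈ goodFinset n, gw k t
noncomputable def hcount (n k : ℕ) : ℕ := ∑ l ∈ LF n, (l.map (gw k)).prod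

open Classical in
theorem treeCount_eq (n k : ℕ) : treeCount n k = (acount n k : ℕ∞) := by
  rw [treeCount]
  have hs : ∀ P : PlaneTree, P ∉ (goodFinset n).image toP →
      (if P.numLeaves = n ∧ ∀ v ∈ P.verts, P.out v ≠ 1
        then ((k : ℕ∞) + 1) ^ P.numInternal else 0) = 0 := by
    intro P hP
    rw [if_neg]
    rintro ⟨h1, h2⟩
    obtain ⟨t, rfl⟩ := toP_surjective P
    obtain ⟨c1, c2, c3⟩ := main_corr t
    exact hP (Finset.mem_image.mpr ⟨t, mem_goodFinset.mpr ⟨c1 ▸ h1, c3.mp h2⟩, rfl⟩)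
  rw [tsum_eq_sum hs, Finset.sum_image (fun x _ y _ h => toP_injective h)]
  have : ∀ t ∈ goodFinset n,
      (if (toP t).numLeaves = n ∧ ∀ v ∈ (toP t).verts, (toP t).out v ≠ 1
        then ((k : ℕ∞) + 1) ^ (toP t).numInternal else 0)
      = ((k+1 : ℕ) : ℕ∞) ^ (internal t) := by
    intro t ht
    obtain ⟨hl, hg⟩ := mem_goodFinset.mp ht
    obtain ⟨c1, c2, c3⟩ := main_corr t
    rw [if_pos ⟨c1 ▸ hl, c3.mpr hg⟩, c2]
    norm_cast
  rw [Finset.sum_congr rfl this, acount]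
  push_cast
  rfl

end PT

namespace PT

theorem prod_gw (k : ℕ) : ∀ l : List PT, fgood l →
    (k+1)^(finternal l) = (l.map (gw k)).prod := by
  intro l
  induction l with
  | nil => intro _; simp [finternal]
  | cons t ts ih =>
    rintro ⟨hgt, hgts⟩
    rw [List.map_cons, List.prod_cons, ← ih hgts, finternal]
    rw [gw, if_pos hgt]
    rw [pow_add, pow_add]
    by_cases hdeg : 2 ≤ deg t <;> simp [hdeg] <;> ring

theorem leaves_node_ne_nil {l : List PT} (h : l ≠ []) : leaves (node l) = fleaves l := by
  cases l with
  | nil => exact absurd rfl h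
  | cons t ts => rw [leaves]

theorem good_node {l : List PT} : good (node l) ↔ l.length ≠ 1 ∧ fgood l := by
  rw [good]

open Classical in
theorem goodFinset_decomp (n : ℕ) :
    goodFinset n = (if n = 1 then {node ([] : List PT)} else ∅)
      ∪ ((LF n).filter (fun l => 2 ≤ l.length)).image node := by
  ext t
  cases t with | node l =>
  rw [Finset.mem_union, mem_goodFinset, Finset.mem_image]
  constructor
  · rintro ⟨hl, hg⟩
    obtain ⟨hlen, hfg⟩ := good_node.mp hg
    cases l with
    | nil =>
      left
      have : n = 1 := by rw [← hl]; rfl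
      simp [this]
    | cons s ts =>
      right
      refine ⟨s :: ts, Finset.mem_filter.mpr ⟨mem_LF.mpr ⟨by simp, hfg, ?_⟩, ?_⟩, rfl⟩
      · rw [← leaves_node_ne_nil (by simp), hl]
      · have : (s :: ts).length ≠ 1 := hlen
        simp only [List.length_cons] at this ⊢
        omega
  · rintro (h | ⟨l', hl', heq⟩)
    · have hn : n = 1 := by
        by_contra hn
        simp [hn] at h
      have h' : node l ∈ ({node ([] : List PT)} : Finset PT) := by simpa [hn] using h
      have h'' := Finset.mem_singleton.mp h'
      obtain rfl : l = [] := by injection h''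
      exact ⟨by rw [hn]; rfl, good_node.mpr ⟨by simp, trivial⟩⟩
    · obtain rfl : l' = l := by injection heq
      obtain ⟨hmem, hlen⟩ := Finset.mem_filter.mp hl'
      obtain ⟨hne, hfg, hfl⟩ := mem_LF.mp hmem
      exact ⟨by rw [leaves_node_ne_nil hne, hfl], good_node.mpr ⟨by omega, hfg⟩⟩

open Classical in
noncomputable def R (n k : ℕ) : ℕ :=
  ∑ l ∈ (LF n).filter (fun l => 2 ≤ l.length), (l.map (gw k)).prod

open Classical in
theorem sum_decomp (n k : ℕ) (F : PT → ℕ) :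
    ∑ t ∈ goodFinset n, F t
      = (if n = 1 then F (node []) else 0)
        + ∑ l ∈ (LF n).filter (fun l => 2 ≤ l.length), F (node l) := by
  rw [goodFinset_decomp n]
  have hdisj : Disjoint (if n = 1 then ({node ([] : List PT)} : Finset PT) else ∅)
      (((LF n).filter (fun l => 2 ≤ l.length)).image node) := by
    by_cases hn : n = 1
    · simp only [hn, if_pos rfl]
      rw [Finset.disjoint_left]
      rintro t ht ht'
      obtain rfl : t = node [] := Finset.mem_singleton.mp ht
      obtain ⟨l', hl', heq⟩ := Finset.mem_image.mp ht'
      obtain rfl : l' = [] := by injection heq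
      have := (Finset.mem_filter.mp hl').2
      simp at this
    · simp [hn]
  have h1 : ∑ t ∈ (if n = 1 then ({node ([] : List PT)} : Finset PT) else ∅), F t
      = (if n = 1 then F (node []) else 0) := by
    by_cases hn : n = 1 <;> simp [hn]
  rw [Finset.sum_union hdisj, h1, Finset.sum_image (fun x _ y _ h => by injection h)]

theorem acount_eq (n k : ℕ) : acount n k = (if n = 1 then 1 else 0) + R n k := by
  rw [acount, sum_decomp n k (fun t => (k+1)^(internal t)), R]
  have h2 : ∀ l ∈ (LF n).filter (fun l => 2 ≤ l.length),
      (k+1)^(internal (node l)) = (l.map (gw k)).prod := by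
    intro l hl
    obtain ⟨hmem, hlen⟩ := Finset.mem_filter.mp hl
    obtain ⟨hne, hfg, hfl⟩ := mem_LF.mp hmem
    rw [internal, prod_gw k l hfg]
  rw [Finset.sum_congr rfl h2]
  by_cases hn : n = 1 <;> simp [hn, internal, finternal]

theorem gcount_eq (n k : ℕ) : gcount n k = (if n = 1 then 1 else 0) + (k+1) * R n k := by
  rw [gcount, sum_decomp n k (gw k), R, Finset.mul_sum]
  have h2 : ∀ l ∈ (LF n).filter (fun l => 2 ≤ l.length),
      gw k (node l) = (k+1) * (l.map (gw k)).prod := by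
    intro l hl
    obtain ⟨hmem, hlen⟩ := Finset.mem_filter.mp hl
    obtain ⟨hne, hfg, hfl⟩ := mem_LF.mp hmem
    have hg : good (node l) := good_node.mpr ⟨by omega, hfg⟩
    rw [gw, if_pos hg, if_pos (show 2 ≤ deg (node l) from hlen)]
    rw [internal, prod_gw k l hfg]
    ring
  rw [Finset.sum_congr rfl h2]
  by_cases hn : n = 1 <;> simp [hn, gw, good_node, fgood, internal, finternal, deg]

open Classical in
theorem hcount_eq (n k : ℕ) : hcount n k = gcount n k + R n k := by
  rw [hcount, ← Finset.sum_filter_add_sum_filter_not (LF n) (fun l => l.length = 1)]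
  congr 1
  · have himg : (LF n).filter (fun l => l.length = 1)
        = (goodFinset n).image (fun t => [t]) := by
      ext l
      rw [Finset.mem_filter, Finset.mem_image]
      constructor
      · rintro ⟨hmem, hlen⟩
        obtain ⟨hne, hfg, hfl⟩ := mem_LF.mp hmem
        cases l with
        | nil => simp at hlen
        | cons t ts =>
          obtain rfl : ts = [] := by
            simp only [List.length_cons] at hlen
            exact List.length_eq_zero_iff.mp (by omega)
          refine ⟨t, mem_goodFinset.mpr ⟨?_, hfg.1⟩, rfl⟩
          rw [← hfl, fleaves, fleaves]
          omega
      · rintro ⟨t, ht, rfl⟩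
        obtain ⟨hl, hg⟩ := mem_goodFinset.mp ht
        exact ⟨mem_LF.mpr ⟨by simp, ⟨hg, trivial⟩, by rw [fleaves, fleaves]; omega⟩, rfl⟩
    rw [himg, Finset.sum_image (fun x _ y _ h => by injection h), gcount]
    refine Finset.sum_congr rfl (fun t ht => ?_)
    simp
  · rw [R]
    apply Finset.sum_congr
    · apply Finset.filter_congr
      intro l hl
      obtain ⟨hne, -, -⟩ := mem_LF.mp hl
      have : l.length ≠ 0 := fun h => hne (List.length_eq_zero_iff.mp h)
      constructor
      · intro h; omega
      · intro h; omega
    · intro l _; rfl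

open Classical in
theorem R_eq (n k : ℕ) :
    R n k = ∑ p ∈ Finset.HasAntidiagonal.antidiagonal n, gcount p.1 k * hcount p.2 k := by
  have expand : ∀ p : ℕ × ℕ, gcount p.1 k * hcount p.2 k
      = ∑ q ∈ (goodFinset p.1) ×ˢ (LF p.2), gw k q.1 * (q.2.map (gw k)).prod := by
    intro p
    rw [gcount, hcount, Finset.sum_mul_sum, Finset.sum_product]
  rw [Finset.sum_congr rfl (fun p _ => expand p)]
  rw [Finset.sum_sigma' (Finset.HasAntidiagonal.antidiagonal n)
    (fun p => (goodFinset p.1) ×ˢ (LF p.2))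
    (fun p q => gw k q.1 * (q.2.map (gw k)).prod)]
  rw [R]
  refine (Finset.sum_bij' (fun z _ => z.2.1 :: z.2.2)
    (fun l _ => ⟨(leaves l.headI, fleaves l.tail), (l.headI, l.tail)⟩) ?_ ?_ ?_ ?_ ?_).symm
  · rintro ⟨⟨p1, p2⟩, t, l⟩ hz
    simp only [Finset.mem_sigma, Finset.mem_product, Finset.HasAntidiagonal.mem_antidiagonal,
      mem_goodFinset, mem_LF] at hz
    obtain ⟨hp, ⟨hlv, hg⟩, hne, hfg, hfl⟩ := hz
    have hp' : p1 + p2 = n := hp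
    have hlv' : leaves t = p1 := hlv
    have hfl' : fleaves l = p2 := hfl
    show (t :: l) ∈ Finset.filter (fun l => 2 ≤ l.length) (LF n)
    refine Finset.mem_filter.mpr ⟨mem_LF.mpr ⟨by simp, ⟨hg, hfg⟩, ?_⟩, ?_⟩
    · rw [fleaves]; omega
    · have : l.length ≠ 0 := fun h => hne (List.length_eq_zero_iff.mp h)
      simp only [List.length_cons]
      omega
  · rintro l hl
    obtain ⟨hmem, hlen⟩ := Finset.mem_filter.mp hl
    obtain ⟨hne, hfg, hfl⟩ := mem_LF.mp hmem
    cases l with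
    | nil => exact absurd rfl hne
    | cons t ts =>
      simp only [List.headI_cons, List.tail_cons]
      refine Finset.mem_sigma.mpr ⟨Finset.HasAntidiagonal.mem_antidiagonal.mpr ?_,
        Finset.mem_product.mpr ⟨mem_goodFinset.mpr ⟨rfl, hfg.1⟩,
          mem_LF.mpr ⟨?_, hfg.2, rfl⟩⟩⟩
      · rw [← hfl, fleaves]
      · intro h
        subst h
        simp at hlen
  · rintro ⟨⟨p1, p2⟩, t, l⟩ hz
    simp only [Finset.mem_sigma, Finset.mem_product, Finset.HasAntidiagonal.mem_antidiagonal,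
      mem_goodFinset, mem_LF] at hz
    obtain ⟨hp, ⟨hlv, -⟩, -, -, hfl⟩ := hz
    have hlv' : leaves t = p1 := hlv
    have hfl' : fleaves l = p2 := hfl
    subst hlv'
    subst hfl'
    rfl
  · rintro l hl
    obtain ⟨hmem, -⟩ := Finset.mem_filter.mp hl
    obtain ⟨hne, -, -⟩ := mem_LF.mp hmem
    cases l with
    | nil => exact absurd rfl hne
    | cons t ts => simp
  · rintro ⟨p, t, l⟩ _
    show gw k t * (l.map (gw k)).prod = ((t :: l).map (gw k)).prod
    rw [List.map_cons, List.prod_cons]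

theorem goodFinset_zero : goodFinset 0 = ∅ := by
  ext t
  rw [mem_goodFinset]
  simp only [Finset.notMem_empty, iff_false]
  rintro ⟨hl, -⟩
  have := one_le_leaves t
  omega

theorem LF_zero : LF 0 = ∅ := by
  ext l
  rw [mem_LF]
  simp only [Finset.notMem_empty, iff_false]
  rintro ⟨hne, -, hfl⟩
  have := length_le_fleaves l
  have : l.length ≠ 0 := fun h => hne (List.length_eq_zero_iff.mp h)
  omega

theorem acount_zero (k : ℕ) : acount 0 k = 0 := by rw [acount, goodFinset_zero]; rfl
theorem gcount_zero (k : ℕ) : gcount 0 k = 0 := by rw [gcount, goodFinset_zero]; rfl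
theorem hcount_zero (k : ℕ) : hcount 0 k = 0 := by rw [hcount, LF_zero]; rfl

theorem gcount_rel (n k : ℕ) :
    gcount n k + k * (if n = 1 then 1 else 0) = (k+1) * acount n k := by
  rw [gcount_eq, acount_eq]
  by_cases hn : n = 1 <;> simp [hn] <;> ring

end PT

namespace PT

theorem R_range (n k : ℕ) :
    R n k = ∑ i ∈ Finset.range (n+1), gcount i k * hcount (n-i) k := by
  rw [R_eq, Finset.Nat.sum_antidiagonal_eq_sum_range_succ_mk]

theorem R_one (k : ℕ) : R 1 k = 0 := by
  rw [R_range]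
  simp [Finset.sum_range_succ, gcount_zero, hcount_zero]

theorem acount_one (k : ℕ) : acount 1 k = 1 := by rw [acount_eq, R_one]; norm_num
theorem gcount_one (k : ℕ) : gcount 1 k = 1 := by rw [gcount_eq, R_one]; simp
theorem hcount_one (k : ℕ) : hcount 1 k = 1 := by rw [hcount_eq, gcount_one, R_one]

theorem R_two (k : ℕ) : R 2 k = 1 := by
  rw [R_range]
  simp [Finset.sum_range_succ, gcount_zero, hcount_zero, gcount_one, hcount_one]

theorem acount_two (k : ℕ) : acount 2 k = 1 := by rw [acount_eq, R_two]; norm_num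
theorem gcount_two (k : ℕ) : gcount 2 k = k + 1 := by rw [gcount_eq, R_two]; simp
theorem hcount_two (k : ℕ) : hcount 2 k = k + 2 := by
  rw [hcount_eq, gcount_two, R_two]

theorem R_three (k : ℕ) : R 3 k = 2 * k + 3 := by
  rw [R_range]
  simp [Finset.sum_range_succ, gcount_zero, hcount_zero, gcount_one, hcount_one,
    gcount_two, hcount_two]
  ring

theorem acount_three (k : ℕ) : acount 3 k = 2 * k + 3 := by rw [acount_eq, R_three]; norm_num
theorem gcount_three (k : ℕ) : gcount 3 k = (k + 1) * (2 * k + 3) := by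
  rw [gcount_eq, R_three]; simp
theorem hcount_three (k : ℕ) : hcount 3 k = (k + 2) * (2 * k + 3) := by
  rw [hcount_eq, gcount_three, R_three]; ring

theorem R_four (k : ℕ) : R 4 k = 5 * k^2 + 15 * k + 11 := by
  rw [R_range]
  simp [Finset.sum_range_succ, gcount_zero, hcount_zero, gcount_one, hcount_one,
    gcount_two, hcount_two, gcount_three, hcount_three]
  ring

theorem acount_four (k : ℕ) : acount 4 k = 5 * k^2 + 15 * k + 11 := by
  rw [acount_eq, R_four]; norm_num

end PT

/-- The counts `c_n(k)` are finite, the generating function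
`F_k(z) = ∑_{n≥1} c_n(k) z^n ∈ ℤ⟦z⟧` satisfies
`(k+1)(k+2) F_k² − (1+(2k²+4k+1)z) F_k + k(k+1)z² + z = 0`, and
`c_1(k) = c_2(k) = 1`, `c_3(k) = 2(k+1)+1`, `c_4(k) = 5(k+1)²+5(k+1)+1`. -/
theorem treeCount_generating_function :
    (∀ n k : ℕ, 1 ≤ n → treeCount n k ≠ ⊤) ∧
    (∀ k : ℕ,
      letI F : PowerSeries ℤ :=
        PowerSeries.mk fun n => if n = 0 then 0 else ((treeCount n k).toNat : ℤ)
      PowerSeries.C (((k : ℤ) + 1) * ((k : ℤ) + 2)) * F ^ 2 -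
          (1 + PowerSeries.C (2 * (k : ℤ) ^ 2 + 4 * (k : ℤ) + 1) * PowerSeries.X) * F +
          PowerSeries.C ((k : ℤ) * ((k : ℤ) + 1)) * PowerSeries.X ^ 2 +
          PowerSeries.X = 0) ∧
    (∀ k : ℕ, treeCount 1 k = 1 ∧ treeCount 2 k = 1 ∧
      treeCount 3 k = 2 * ((k : ℕ∞) + 1) + 1 ∧
      treeCount 4 k = 5 * ((k : ℕ∞) + 1) ^ 2 + 5 * ((k : ℕ∞) + 1) + 1) := by
  have hfin : ∀ n k : ℕ, treeCount n k ≠ ⊤ := fun n k => by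
    rw [PT.treeCount_eq]; exact ENat.coe_ne_top _
  refine ⟨fun n k _ => hfin n k, ?_, ?_⟩
  · intro k
    set A : PowerSeries ℤ := PowerSeries.mk fun n => (PT.acount n k : ℤ) with hA
    set G : PowerSeries ℤ := PowerSeries.mk fun n => (PT.gcount n k : ℤ) with hG
    set H : PowerSeries ℤ := PowerSeries.mk fun n => (PT.hcount n k : ℤ) with hH
    have hGH : ∀ n : ℕ, PowerSeries.coeff n (G * H) = (PT.R n k : ℤ) := by
      intro n
      rw [PowerSeries.coeff_mul, PT.R_eq, Nat.cast_sum]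
      refine Finset.sum_congr rfl fun p _ => ?_
      simp [hG, hH, PowerSeries.coeff_mk]
    have E1 : A = PowerSeries.X + G * H := by
      ext n
      rw [map_add, hGH, PowerSeries.coeff_X, hA, PowerSeries.coeff_mk, PT.acount_eq n k]
      by_cases hn : n = 1 <;> simp [hn]
    have E2 : H = G + G * H := by
      ext n
      rw [map_add, hGH, hH, hG, PowerSeries.coeff_mk, PowerSeries.coeff_mk, PT.hcount_eq n k]
      push_cast
      ring
    have E3 : G = PowerSeries.C ((k : ℤ) + 1) * A
        - PowerSeries.C (k : ℤ) * PowerSeries.X := by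
      ext n
      rw [map_sub, PowerSeries.coeff_C_mul, PowerSeries.coeff_C_mul, PowerSeries.coeff_X,
        hG, hA, PowerSeries.coeff_mk, PowerSeries.coeff_mk]
      have hrel := PT.gcount_rel n k
      by_cases hn : n = 1
      · subst hn
        rw [if_pos rfl]
        rw [if_pos rfl, mul_one] at hrel
        have : ((PT.gcount 1 k : ℤ)) + (k : ℤ) = ((k : ℤ) + 1) * (PT.acount 1 k : ℤ) := by
          exact_mod_cast hrel
        linarith
      · rw [if_neg hn]
        rw [if_neg hn, mul_zero, add_zero] at hrel
        have : ((PT.gcount n k : ℤ)) = ((k : ℤ) + 1) * (PT.acount n k : ℤ) := by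
          exact_mod_cast hrel
        linarith
    have hE : (A - PowerSeries.X) * (1 - G) = G ^ 2 := by
      linear_combination (1 - G) * E1 + G * E2
    have hF : (PowerSeries.mk fun n => if n = 0 then 0 else ((treeCount n k).toNat : ℤ)) = A := by
      ext n
      rw [hA, PowerSeries.coeff_mk, PowerSeries.coeff_mk]
      by_cases hn : n = 0
      · simp [hn, PT.acount_zero]
      · rw [if_neg hn, PT.treeCount_eq, ENat.toNat_coe]
    rw [hF]
    rw [E3] at hE
    have hC1 : (PowerSeries.C) (((k:ℤ)+1) * ((k:ℤ)+2))
        = (PowerSeries.C (k:ℤ) + 1) * (PowerSeries.C (k:ℤ) + 2) := by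
      simp [map_add, map_mul, map_ofNat]
    have hC2 : (PowerSeries.C) (2 * (k:ℤ)^2 + 4 * (k:ℤ) + 1)
        = 2 * (PowerSeries.C (k:ℤ))^2 + 4 * PowerSeries.C (k:ℤ) + 1 := by
      simp [map_add, map_mul, map_pow, map_ofNat]
    have hC3 : (PowerSeries.C) ((k:ℤ) * ((k:ℤ)+1))
        = PowerSeries.C (k:ℤ) * (PowerSeries.C (k:ℤ) + 1) := by
      simp [map_add, map_mul]
    have hC4 : (PowerSeries.C) ((k:ℤ)+1) = PowerSeries.C (k:ℤ) + 1 := by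
      simp [map_add]
    rw [hC1, hC2, hC3]
    rw [hC4] at hE
    linear_combination -hE
  · intro k
    refine ⟨?_, ?_, ?_, ?_⟩
    · rw [PT.treeCount_eq, PT.acount_one]; rfl
    · rw [PT.treeCount_eq, PT.acount_two]; rfl
    · rw [PT.treeCount_eq, PT.acount_three]; push_cast; ring
    · rw [PT.treeCount_eq, PT.acount_four]; push_cast; ring
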